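/- arXiv:2209.03925 — 2 statements merged into one kernel-verified Lean document; each statement's English description precedes it below -/
import Mathlib

section
/- A nondecreasing sequence of nonnegative integers s = (s_0, ..., s_{n-1}) is the score sequence of some tournament on n vertices (i.e., the sorted out-degree sequence of an orientation of the complete graph K_n) if and only if s_0 + ... + s_{k-1} ≥ binomial(k,2) for all 1 ≤ k ≤ n, with equality for k = n. -/
/-- A score sequence: nondecreasing, entries in `[0, n-1]`, prefix sums at least
`binom k 2`, and total sum `binom n 2`. -/
def IsScoreSeq (s : List ℕ) : Prop :=
  s.Pairwise (· ≤ ·) ∧ (∀ x ∈ s, x < s.length) ∧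
    (∀ k, 0 < k → k < s.length → k.choose 2 ≤ (s.take k).sum) ∧
    s.sum = s.length.choose 2

/-- A strong score sequence: nonempty and all proper prefix-sum inequalities strict. -/
def IsStrongScoreSeq (s : List ℕ) : Prop :=
  IsScoreSeq s ∧ s ≠ [] ∧ ∀ k, 0 < k → k < s.length → k.choose 2 < (s.take k).sum

/-- Direct sum of score sequences: concatenate `u` with `v` shifted up by `u.length`. -/
def dsum (u v : List ℕ) : List ℕ := u ++ v.map (· + u.length)

/-- Iterated direct sum of a list of score sequences. -/
def dsumAll (ts : List (List ℕ)) : List ℕ := ts.foldl dsum []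

/-- `s + j`: entries shifted by `j`, reduced modulo the length, sorted nondecreasingly. -/
def shift (s : List ℕ) (j : ℕ) : List ℕ :=
  Multiset.sort ((s.map fun x => (x + j) % s.length : List ℕ) : Multiset ℕ) (· ≤ ·)


open Finset

variable {n : ℕ}

def outdeg (T : Fin n → Fin n → Bool) (i : Fin n) : ℕ :=
  (Finset.univ.filter fun j => T i j = true).card

lemma choose_two_succ (k : ℕ) : (k + 1).choose 2 = k.choose 2 + k := by
  simp [Nat.choose_succ_succ k 1, Nat.add_comm]

lemma two_mul_choose_two (k : ℕ) : 2 * k.choose 2 = k * (k - 1) := by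
  induction k with
  | zero => simp
  | succ m ih =>
    rw [choose_two_succ, Nat.mul_add, ih]
    cases m with
    | zero => simp
    | succ l => simp; ring_nf

lemma sum_deg_in (T : Fin n → Fin n → Bool) (hIrr : ∀ i, T i i = false)
    (hAsym : ∀ i j, i ≠ j → T i j = !T j i) (A : Finset (Fin n)) :
    ∑ i ∈ A, (A.filter fun j => T i j = true).card = A.card.choose 2 := by
  have h1 : ∑ i ∈ A, (A.filter fun j => T i j = true).card
      = ∑ p ∈ A.offDiag, (if T p.1 p.2 = true then 1 else 0) := by
    rw [show A.offDiag = (A ×ˢ A).filter (fun a => a.1 ≠ a.2) from by ext; simp [and_assoc], Finset.sum_filter, Finset.sum_product]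
    refine Finset.sum_congr rfl fun i _ => ?_
    rw [Finset.card_filter]
    refine Finset.sum_congr rfl fun j _ => ?_
    by_cases h : i = j
    · subst h; simp [hIrr i]
    · simp [h]
  have h2 : ∑ p ∈ A.offDiag, (if T p.2 p.1 = true then 1 else 0)
      = ∑ p ∈ A.offDiag, (if T p.1 p.2 = true then 1 else 0) := by
    refine Finset.sum_nbij' (i := Prod.swap) (j := Prod.swap) ?_ ?_ ?_ ?_ ?_
    · intro p hp; rw [Finset.mem_offDiag] at hp ⊢; exact ⟨hp.2.1, hp.1, fun h => hp.2.2 h.symm⟩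
    · intro p hp; rw [Finset.mem_offDiag] at hp ⊢; exact ⟨hp.2.1, hp.1, fun h => hp.2.2 h.symm⟩
    · intro p _; rfl
    · intro p _; rfl
    · intro p _; rfl
  have h3 : (∑ p ∈ A.offDiag, (if T p.1 p.2 = true then 1 else 0))
      + (∑ p ∈ A.offDiag, (if T p.1 p.2 = true then 1 else 0)) = A.card * (A.card - 1) := by
    nth_rewrite 1 [← h2]
    rw [← Finset.sum_add_distrib]
    have hc : A.card * (A.card - 1) = A.offDiag.card := by
      rw [Finset.offDiag_card]; cases A.card with
      | zero => simp
      | succ l => simp [Nat.mul_succ, Nat.succ_mul]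
    rw [hc, Finset.card_eq_sum_ones A.offDiag]
    refine Finset.sum_congr rfl fun p hp => ?_
    rw [Finset.mem_offDiag] at hp
    have hne : p.1 ≠ p.2 := hp.2.2
    have := hAsym p.1 p.2 hne
    cases hT : T p.2 p.1 <;> simp [this, hT]
  have := two_mul_choose_two A.card
  omega

lemma choose_le_sum_outdeg (T : Fin n → Fin n → Bool) (hIrr : ∀ i, T i i = false)
    (hAsym : ∀ i j, i ≠ j → T i j = !T j i) (A : Finset (Fin n)) :
    A.card.choose 2 ≤ ∑ i ∈ A, outdeg T i := by
  rw [← sum_deg_in T hIrr hAsym A]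
  refine Finset.sum_le_sum fun i _ => ?_
  exact Finset.card_le_card (Finset.filter_subset_filter _ (Finset.subset_univ A))

lemma sum_outdeg (T : Fin n → Fin n → Bool) (hIrr : ∀ i, T i i = false)
    (hAsym : ∀ i j, i ≠ j → T i j = !T j i) :
    ∑ i, outdeg T i = n.choose 2 := by
  have := sum_deg_in T hIrr hAsym Finset.univ
  simpa [outdeg] using this

def flipE (T : Fin n → Fin n → Bool) (x y : Fin n) : Fin n → Fin n → Bool :=
  fun i j => if i = x ∧ j = y then false else if i = y ∧ j = x then true else T i j

lemma flip_irr {T : Fin n → Fin n → Bool} {x y : Fin n} (hIrr : ∀ i, T i i = false)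
    (hxy : x ≠ y) : ∀ i, flipE T x y i i = false := by
  intro i
  unfold flipE
  rw [if_neg, if_neg]
  · exact hIrr i
  · rintro ⟨rfl, rfl⟩; exact hxy rfl
  · rintro ⟨rfl, rfl⟩; exact hxy rfl

lemma flip_asym {T : Fin n → Fin n → Bool} {x y : Fin n}
    (hAsym : ∀ i j, i ≠ j → T i j = !T j i) (hxy : x ≠ y) :
    ∀ i j, i ≠ j → flipE T x y i j = !flipE T x y j i := by
  intro i j hij
  have h1 := hAsym i j hij
  unfold flipE
  by_cases ha : i = x ∧ j = y
  · obtain ⟨rfl, rfl⟩ := ha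
    rw [if_pos ⟨rfl, rfl⟩, if_neg (fun h => hxy h.2), if_pos ⟨rfl, rfl⟩]
    rfl
  · by_cases hb : i = y ∧ j = x
    · obtain ⟨rfl, rfl⟩ := hb
      rw [if_neg (fun h => hxy h.2), if_pos ⟨rfl, rfl⟩, if_pos ⟨rfl, rfl⟩]
      rfl
    · rw [if_neg ha, if_neg hb, if_neg (fun h => hb ⟨h.2, h.1⟩), if_neg (fun h => ha ⟨h.2, h.1⟩)]
      exact h1

lemma flip_filter_fst {T : Fin n → Fin n → Bool} {x y : Fin n} (hxy : x ≠ y) :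
    (Finset.univ.filter fun j => flipE T x y x j = true)
      = (Finset.univ.filter fun j => T x j = true).erase y := by
  ext j
  simp only [Finset.mem_erase, Finset.mem_filter, Finset.mem_univ, true_and, flipE]
  by_cases hj : j = y
  · subst hj; simp
  · rw [if_neg hj, if_neg (fun h => hxy h.1)]
    tauto

lemma flip_filter_snd {T : Fin n → Fin n → Bool} {x y : Fin n} (hxy : x ≠ y) :
    (Finset.univ.filter fun j => flipE T x y y j = true)
      = insert x (Finset.univ.filter fun j => T y j = true) := by
  ext j
  simp only [Finset.mem_insert, Finset.mem_filter, Finset.mem_univ, true_and, flipE]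
  by_cases hj : j = x
  · subst hj
    rw [if_neg (fun h => hxy h.1.symm), if_pos rfl]
    simp
  · rw [if_neg (fun h => hxy h.1.symm), if_neg hj]
    tauto

lemma outdeg_flip_fst {T : Fin n → Fin n → Bool} {x y : Fin n} (hxy : x ≠ y)
    (ht : T x y = true) : outdeg (flipE T x y) x + 1 = outdeg T x := by
  unfold outdeg
  rw [flip_filter_fst hxy]
  exact Finset.card_erase_add_one (by simp [ht])

lemma outdeg_flip_snd {T : Fin n → Fin n → Bool} {x y : Fin n}
    (hAsym : ∀ i j, i ≠ j → T i j = !T j i) (hxy : x ≠ y)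
    (ht : T x y = true) : outdeg (flipE T x y) y = outdeg T y + 1 := by
  unfold outdeg
  rw [flip_filter_snd hxy]
  rw [Finset.card_insert_of_notMem]
  simp only [Finset.mem_filter, Finset.mem_univ, true_and]
  rw [hAsym y x (Ne.symm hxy), ht]
  simp

lemma outdeg_flip_other {T : Fin n → Fin n → Bool} {x y i : Fin n} (hix : i ≠ x)
    (hiy : i ≠ y) : outdeg (flipE T x y) i = outdeg T i := by
  unfold outdeg
  congr 1
  refine Finset.filter_congr fun j _ => ?_
  unfold flipE
  rw [if_neg (fun h => hix h.1), if_neg (fun h => hiy h.1)]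

lemma transfer {T : Fin n → Fin n → Bool} (hIrr : ∀ i, T i i = false)
    (hAsym : ∀ i j, i ≠ j → T i j = !T j i) (a b : Fin n) (hab : a ≠ b)
    (hd : outdeg T b + 2 ≤ outdeg T a) :
    ∃ T' : Fin n → Fin n → Bool, (∀ i, T' i i = false) ∧ (∀ i j, i ≠ j → T' i j = !T' j i) ∧
      outdeg T' a + 1 = outdeg T a ∧ outdeg T' b = outdeg T b + 1 ∧
      ∀ c, c ≠ a → c ≠ b → outdeg T' c = outdeg T c := by
  by_cases hTab : T a b = true
  · refine ⟨flipE T a b, flip_irr hIrr hab, flip_asym hAsym hab,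
      outdeg_flip_fst hab hTab, outdeg_flip_snd hAsym hab hTab, fun c hca hcb =>
      outdeg_flip_other hca hcb⟩
  · -- T a b = false, so T b a = true
    have hTba : T b a = true := by
      have := hAsym a b hab
      simp only [Bool.not_eq_true] at hTab
      rw [hTab] at this
      simpa using this.symm
    -- find c with T a c = true, T c b = true
    obtain ⟨c, hcSa, hcSb⟩ :
        ∃ c, c ∈ (Finset.univ.filter fun j => T a j = true) ∧
          c ∉ insert b (Finset.univ.filter fun j => T b j = true) := by
      by_contra hcon
      push_neg at hcon
      have hsub : (Finset.univ.filter fun j => T a j = true) ⊆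
          insert b (Finset.univ.filter fun j => T b j = true) := fun c hc => hcon c hc
      have := Finset.card_le_card hsub
      have hci := Finset.card_insert_le b (Finset.univ.filter fun j => T b j = true)
      unfold outdeg at hd
      omega
    simp only [Finset.mem_filter, Finset.mem_univ, true_and] at hcSa
    simp only [Finset.mem_insert, Finset.mem_filter, Finset.mem_univ, true_and,
      not_or] at hcSb
    obtain ⟨hcb, hTbc⟩ := hcSb
    have hca : c ≠ a := fun h => by rw [h, hIrr a] at hcSa; exact Bool.false_ne_true hcSa
    have hTbc' : T b c = false := by simpa using hTbc
    have hTcb : T c b = true := by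
      have h := hAsym c b hcb
      rw [hTbc'] at h
      simpa using h
    -- double flip: flip a→c, then c→b
    set T1 := flipE T a c with hT1
    have h1Irr : ∀ i, T1 i i = false := flip_irr hIrr (Ne.symm hca)
    have h1Asym : ∀ i j, i ≠ j → T1 i j = !T1 j i := flip_asym hAsym (Ne.symm hca)
    have hT1cb : T1 c b = true := by
      rw [hT1]
      unfold flipE
      rw [if_neg (fun h => hca h.1), if_neg (fun h => hab (h.2.symm))]
      exact hTcb
    refine ⟨flipE T1 c b, flip_irr h1Irr hcb, flip_asym h1Asym hcb, ?_, ?_, ?_⟩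
    · rw [outdeg_flip_other (Ne.symm hca) hab]
      exact outdeg_flip_fst (Ne.symm hca) hcSa
    · rw [outdeg_flip_snd h1Asym hcb hT1cb,
        outdeg_flip_other (Ne.symm hab) (fun h => hcb h.symm)]
    · intro d hda hdb
      by_cases hdc : d = c
      · subst hdc
        have h1 := outdeg_flip_fst hcb hT1cb
        have h2 : outdeg T1 d = outdeg T d + 1 := outdeg_flip_snd hAsym (Ne.symm hca) hcSa
        omega
      · rw [outdeg_flip_other hdc hdb, outdeg_flip_other hda hdc]

lemma card_filter_val_lt (k : ℕ) (hk : k ≤ n) :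
    (Finset.univ.filter fun i : Fin n => i.val < k).card = k := by
  rw [Finset.card_filter]
  rw [Fin.sum_univ_eq_sum_range (fun m => if m < k then 1 else 0) n]
  rw [← Finset.card_filter]
  have : (Finset.range n).filter (fun m => m < k) = Finset.range k := by
    ext m; simp only [Finset.mem_filter, Finset.mem_range]; omega
  rw [this, Finset.card_range]

lemma outdeg_transitive (i : Fin n) :
    outdeg (fun i j : Fin n => decide (j < i)) i = i.val := by
  unfold outdeg
  have h : (Finset.univ.filter fun j : Fin n => decide (j < i) = true) =
      Finset.univ.filter fun j : Fin n => j.val < i.val := by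
    refine Finset.filter_congr fun j _ => by rw [decide_eq_true_eq, Fin.lt_def]
  rw [h, card_filter_val_lt i.val (le_of_lt i.isLt)]

lemma sum_filter_val_lt (t : ℕ → ℕ) (k : ℕ) (hk : k ≤ n) :
    ∑ i ∈ Finset.univ.filter (fun i : Fin n => i.val < k), t i.val
      = ∑ i ∈ Finset.range k, t i := by
  rw [Finset.sum_filter]
  rw [Fin.sum_univ_eq_sum_range (fun m => if m < k then t m else 0) n]
  rw [← Finset.sum_filter]
  congr 1
  ext m; simp only [Finset.mem_filter, Finset.mem_range]; omega

lemma key (m : ℕ) : ∀ (t : ℕ → ℕ),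
    (∀ i j, i ≤ j → j < n → t i ≤ t j) →
    (∀ k, k ≤ n → k.choose 2 ≤ ∑ i ∈ Finset.range k, t i) →
    (∑ i ∈ Finset.range n, t i = n.choose 2) →
    (∑ k ∈ Finset.range n, (∑ i ∈ Finset.range (k+1), t i - (k+1).choose 2) ≤ m) →
    ∃ T : Fin n → Fin n → Bool, (∀ i, T i i = false) ∧ (∀ i j, i ≠ j → T i j = !T j i) ∧
      ∃ e : Equiv.Perm (Fin n), ∀ i : Fin n, t i.val = outdeg T (e i) := by
  induction m with
  | zero =>
    intro t hm hL hsum hΦ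
    refine ⟨fun i j => decide (j < i), fun i => by simp, ?_, Equiv.refl _, ?_⟩
    · intro i j hij
      rcases (Fin.lt_or_lt_of_ne hij) with h | h
      · simp [h, not_lt_of_gt h]
      · simp [h, not_lt_of_gt h]
    · intro i
      rw [Equiv.refl_apply, outdeg_transitive]
      -- all prefix sums are tight since Φ = 0
      have hall : ∀ k, k ≤ n → (∑ i ∈ Finset.range k, t i) = k.choose 2 := by
        intro k hk
        rcases Nat.eq_zero_or_pos k with rfl | hk0
        · simp
        · rcases Nat.eq_or_lt_of_le hk with rfl | hkn
          · exact hsum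
          · have hterm : (∑ i ∈ Finset.range (k - 1 + 1), t i - (k - 1 + 1).choose 2) = 0 := by
              have := Finset.sum_eq_zero_iff.mp (Nat.le_zero.mp hΦ)
              exact this (k - 1) (Finset.mem_range.mpr (by omega))
            have hk1 : k - 1 + 1 = k := by omega
            rw [hk1] at hterm
            have := hL k hk
            omega
      have h1 := hall i.val (le_of_lt i.isLt)
      have h2 := hall (i.val + 1) i.isLt
      rw [Finset.sum_range_succ, choose_two_succ] at h2
      omega
  | succ m ih =>
    intro t hm hL hsum hΦ
    by_cases hall : ∀ k, k ≤ n → (∑ i ∈ Finset.range k, t i) = k.choose 2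
    · refine ⟨fun i j => decide (j < i), fun i => by simp, ?_, Equiv.refl _, ?_⟩
      · intro i j hij
        rcases (Fin.lt_or_lt_of_ne hij) with h | h
        · simp [h, not_lt_of_gt h]
        · simp [h, not_lt_of_gt h]
      · intro i
        rw [Equiv.refl_apply, outdeg_transitive]
        have h1 := hall i.val (le_of_lt i.isLt)
        have h2 := hall (i.val + 1) i.isLt
        rw [Finset.sum_range_succ, choose_two_succ] at h2
        omega
    · push_neg at hall
      obtain ⟨k0, hk0n, hk0ne⟩ := hall
      have hk0strict : k0.choose 2 < ∑ i ∈ Finset.range k0, t i :=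
        lt_of_le_of_ne (hL k0 hk0n) (Ne.symm hk0ne)
      have hk01 : 1 ≤ k0 := by
        by_contra h
        push_neg at h
        interval_cases k0 <;> simp_all
      have hk0lt : k0 < n := by
        rcases Nat.eq_or_lt_of_le hk0n with rfl | h
        · exact absurd hsum hk0ne
        · exact h
      -- define p
      set Pred : ℕ → Prop := fun a => ∑ i ∈ Finset.range a, t i = a.choose 2 with hPred
      have hPred0 : Pred 0 := by simp [hPred]
      set p := Nat.findGreatest Pred (k0 - 1) with hp
      have hp_le : p ≤ k0 - 1 := Nat.findGreatest_le _
      have hp_eq : ∑ i ∈ Finset.range p, t i = p.choose 2 :=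
        Nat.findGreatest_spec (Nat.zero_le _) hPred0
      have hp_lt : p < k0 := by omega
      -- define q
      set Q : ℕ → Prop := fun b => k0 ≤ b ∧ (b = n - 1 ∨ t b < t (b + 1)) with hQdef
      have hQex : ∃ b, Q b := ⟨n - 1, by constructor; omega; exact Or.inl rfl⟩
      set q := Nat.find hQex with hq
      have hQq : Q q := Nat.find_spec hQex
      have hq_le : q ≤ n - 1 := Nat.find_min' hQex ⟨by omega, Or.inl rfl⟩
      have hq_k0 : k0 ≤ q := hQq.1
      have hq_min : ∀ b, k0 ≤ b → b < q → ¬(t b < t (b + 1)) ∧ b ≠ n - 1 := by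
        intro b hb1 hb2
        have hnotQ := Nat.find_min hQex hb2
        rw [hQdef] at hnotQ
        exact ⟨fun hlt => hnotQ ⟨hb1, Or.inr hlt⟩, fun heq => hnotQ ⟨hb1, Or.inl heq⟩⟩
      have hpq : p < q := lt_of_lt_of_le hp_lt hq_k0
      -- strictness on (p, q]
      have strictA : ∀ k, p < k → k ≤ k0 → k.choose 2 < ∑ i ∈ Finset.range k, t i := by
        intro k hk1 hk2
        rcases Nat.eq_or_lt_of_le hk2 with rfl | hk3
        · exact hk0strict
        · have hnP : ¬ Pred k := Nat.findGreatest_is_greatest hk1 (by omega)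
          rw [hPred] at hnP
          exact lt_of_le_of_ne (hL k (by omega)) (Ne.symm hnP)
      have strictB : ∀ k, k0 ≤ k → k ≤ q → k.choose 2 < ∑ i ∈ Finset.range k, t i := by
        intro k
        induction k with
        | zero => intro h1 _; omega
        | succ k ihk =>
          intro h1 h2
          rcases Nat.eq_or_lt_of_le h1 with rfl | h1'
          · exact hk0strict
          · have hk0k : k0 ≤ k := by omega
            have ihs := ihk hk0k (by omega)
            by_contra hcon
            push_neg at hcon
            have heq : ∑ i ∈ Finset.range (k+1), t i = (k+1).choose 2 :=
              le_antisymm hcon (hL (k+1) (by omega))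
            have hs1 : ∑ i ∈ Finset.range (k+1), t i = (∑ i ∈ Finset.range k, t i) + t k :=
              Finset.sum_range_succ t k
            have hc1 : (k+1).choose 2 = k.choose 2 + k := choose_two_succ k
            have htk : t k + 1 ≤ k := by omega
            have hs2 : (k+2).choose 2 ≤ ∑ i ∈ Finset.range (k+2), t i := hL (k+2) (by omega)
            have hs3 : ∑ i ∈ Finset.range (k+2), t i = (∑ i ∈ Finset.range (k+1), t i) + t (k+1) :=
              Finset.sum_range_succ t (k+1)
            have hc2 : (k+2).choose 2 = (k+1).choose 2 + (k+1) := choose_two_succ (k+1)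
            have htk1 : k + 1 ≤ t (k+1) := by omega
            have := (hq_min k hk0k (by omega)).1
            omega
      have strict : ∀ k, p < k → k ≤ q → k.choose 2 < ∑ i ∈ Finset.range k, t i := by
        intro k h1 h2
        rcases le_or_gt k k0 with h | h
        · exact strictA k h1 h
        · exact strictB k (le_of_lt h) h2
      have hqn : q < n := by omega
      have hpn : p < n := by omega
      -- t p is large
      have htp : p + 1 ≤ t p := by
        have h1 := strict (p+1) (by omega) (by omega)
        have h2 : ∑ i ∈ Finset.range (p+1), t i = (∑ i ∈ Finset.range p, t i) + t p :=
          Finset.sum_range_succ t p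
        have h3 := choose_two_succ p
        omega
      -- entries before p are smaller
      have htbefore : ∀ i, i < p → t i < t p := by
        intro i hi
        have hp1 : 1 ≤ p := by omega
        have h1 : ∑ i ∈ Finset.range p, t i = (∑ i ∈ Finset.range (p-1), t i) + t (p-1) := by
          have hpe : p - 1 + 1 = p := by omega
          conv_lhs => rw [← hpe]
          rw [Finset.sum_range_succ]
        have h2 := hL (p-1) (by omega)
        have h3 : p.choose 2 = (p-1).choose 2 + (p-1) := by
          have := choose_two_succ (p-1)
          have hp1' : p - 1 + 1 = p := by omega
          rw [hp1'] at this
          exact this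
        have h4 : t (p-1) ≤ p - 1 := by omega
        have h5 : t i ≤ t (p-1) := hm i (p-1) (by omega) (by omega)
        omega
      -- entries after q are larger
      have htafter : ∀ j, q < j → j < n → t q < t j := by
        intro j hj1 hj2
        have hqn1 : q ≠ n - 1 := by omega
        have hstep : t q < t (q + 1) := by
          rcases hQq.2 with h | h
          · omega
          · exact h
        calc t q < t (q+1) := hstep
          _ ≤ t j := hm (q+1) j (by omega) hj2
      -- the modified sequence
      set t' : ℕ → ℕ := fun i => if i = p then t p - 1 else if i = q then t q + 1 else t i
        with ht'
      have hpq' : p ≠ q := by omega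
      have ht'p : t' p = t p - 1 := by rw [ht']; simp
      have ht'q : t' q = t q + 1 := by
        rw [ht']
        simp only
        rw [if_neg (fun h => hpq' h.symm)]
        simp
      have ht'other : ∀ i, i ≠ p → i ≠ q → t' i = t i := by
        intro i h1 h2; rw [ht']; simp [h1, h2]
      -- prefix sum identity
      have hPrel : ∀ k, (∑ i ∈ Finset.range k, t' i) + (if p < k then 1 else 0)
          = (∑ i ∈ Finset.range k, t i) + (if q < k then 1 else 0) := by
        intro k
        have hpt : ∀ i, t' i + (if i = p then 1 else 0) = t i + (if i = q then 1 else 0) := by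
          intro i
          by_cases h1 : i = p
          · subst h1; rw [ht'p, if_pos rfl, if_neg hpq']; omega
          · by_cases h2 : i = q
            · subst h2; rw [ht'q, if_neg h1, if_pos rfl]
            · rw [ht'other i h1 h2, if_neg h1, if_neg h2]
        have hsum1 : ∑ i ∈ Finset.range k, (t' i + (if i = p then 1 else 0))
            = ∑ i ∈ Finset.range k, (t i + (if i = q then 1 else 0)) :=
          Finset.sum_congr rfl fun i _ => hpt i
        rw [Finset.sum_add_distrib, Finset.sum_add_distrib] at hsum1
        rw [Finset.sum_ite_eq' (Finset.range k) p (fun _ => 1),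
          Finset.sum_ite_eq' (Finset.range k) q (fun _ => 1)] at hsum1
        simp only [Finset.mem_range] at hsum1
        exact hsum1
      -- new hypotheses
      have hm' : ∀ i j, i ≤ j → j < n → t' i ≤ t' j := by
        intro i j hij hjn
        rcases Nat.eq_or_lt_of_le hij with rfl | hij'
        · exact le_refl _
        · by_cases hip : i = p
          · subst hip
            have h1 : t p ≤ t j := hm p j hij hjn
            have h2 : t j ≤ t' j := by
              by_cases hjp : j = p
              · omega
              · by_cases hjq : j = q
                · rw [hjq, ht'q]; have := hm j q (le_of_eq hjq) hqn; omega
                · rw [ht'other j hjp hjq]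
            omega
          · by_cases hiq : i = q
            · subst hiq
              have hjq : j ≠ q := by omega
              have hjp : j ≠ p := by omega
              rw [ht'q, ht'other j hjp hjq]
              exact htafter j hij' hjn
            · rw [ht'other i hip hiq]
              by_cases hjp : j = p
              · subst hjp
                rw [ht'p]
                have := htbefore i hij'
                omega
              · by_cases hjq : j = q
                · subst hjq
                  rw [ht'q]
                  have := hm i q hij hjn
                  omega
                · rw [ht'other j hjp hjq]
                  exact hm i j hij hjn
      have hL' : ∀ k, k ≤ n → k.choose 2 ≤ ∑ i ∈ Finset.range k, t' i := by
        intro k hk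
        have hid := hPrel k
        by_cases h1 : p < k
        · by_cases h2 : k ≤ q
          · have := strict k h1 h2
            rw [if_pos h1, if_neg (by omega)] at hid
            omega
          · rw [if_pos h1, if_pos (by omega)] at hid
            have := hL k hk
            omega
        · rw [if_neg h1, if_neg (by omega)] at hid
          have := hL k hk
          omega
      have hsum' : ∑ i ∈ Finset.range n, t' i = n.choose 2 := by
        have hid := hPrel n
        rw [if_pos hpn, if_pos hqn] at hid
        omega
      have hΦ' : ∑ k ∈ Finset.range n, (∑ i ∈ Finset.range (k+1), t' i - (k+1).choose 2) ≤ m := by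
        have hlt : ∑ k ∈ Finset.range n, (∑ i ∈ Finset.range (k+1), t' i - (k+1).choose 2)
            < ∑ k ∈ Finset.range n, (∑ i ∈ Finset.range (k+1), t i - (k+1).choose 2) := by
          refine Finset.sum_lt_sum (fun k _ => ?_) ⟨k0 - 1, Finset.mem_range.mpr (by omega), ?_⟩
          · have hid := hPrel (k+1)
            by_cases h1 : p < k + 1
            · by_cases h2 : k + 1 ≤ q
              · rw [if_pos h1, if_neg (by omega)] at hid
                omega
              · rw [if_pos h1, if_pos (by omega)] at hid
                omega
            · rw [if_neg h1, if_neg (by omega)] at hid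
              omega
          · have hk01' : k0 - 1 + 1 = k0 := by omega
            rw [hk01']
            have hid := hPrel k0
            rw [if_pos (by omega), if_neg (by omega)] at hid
            omega
        omega
      obtain ⟨T', hIrr', hAsym', e', he'⟩ := ih t' hm' hL' hsum' hΦ'
      set fq : Fin n := ⟨q, hqn⟩ with hfq
      set fp : Fin n := ⟨p, hpn⟩ with hfp
      have hfqp : fq ≠ fp := by
        intro h
        rw [Fin.ext_iff] at h
        exact hpq' (h.symm)
      have hav : outdeg T' (e' fq) = t q + 1 := by
        rw [← he' fq]
        exact ht'q
      have hbv : outdeg T' (e' fp) = t p - 1 := by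
        rw [← he' fp]
        exact ht'p
      have hne : e' fq ≠ e' fp := fun h => hfqp (e'.injective h)
      have hd : outdeg T' (e' fp) + 2 ≤ outdeg T' (e' fq) := by
        have := hm p q (by omega) hqn
        omega
      obtain ⟨T, hIrr, hAsym, hTa, hTb, hTother⟩ := transfer hIrr' hAsym' _ _ hne hd
      refine ⟨T, hIrr, hAsym, e', fun i => ?_⟩
      by_cases hiq : i = fq
      · subst hiq
        show t q = outdeg T (e' fq)
        omega
      · by_cases hip : i = fp
        · subst hip
          show t p = outdeg T (e' fp)
          omega
        · have h1 : e' i ≠ e' fq := fun h => hiq (e'.injective h)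
          have h2 : e' i ≠ e' fp := fun h => hip (e'.injective h)
          rw [hTother _ h1 h2, ← he' i]
          rw [ht'other i.val (fun h => hip (Fin.ext h)) (fun h => hiq (Fin.ext h))]
/-- Landau's theorem: a nondecreasing sequence `s : Fin n → ℕ` is the sorted
out-degree sequence of a tournament on `n` vertices iff all prefix sums are at least
`binom k 2` and the total sum is `binom n 2`. -/
theorem landau (n : ℕ) (s : Fin n → ℕ) (hmono : Monotone s) :
    (∃ T : Fin n → Fin n → Bool,
        (∀ i, T i i = false) ∧ (∀ i j, i ≠ j → T i j = !T j i) ∧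
        ∃ e : Equiv.Perm (Fin n),
          ∀ i, s i = (Finset.univ.filter fun j => T (e i) j = true).card) ↔
      ((∀ k : ℕ, 1 ≤ k → k ≤ n →
          k.choose 2 ≤ ∑ i ∈ Finset.univ.filter (fun i : Fin n => i.val < k), s i) ∧
        ∑ i, s i = n.choose 2) := by
  constructor
  · rintro ⟨T, hIrr, hAsym, e, he⟩
    constructor
    · intro k hk1 hk2
      have hcard : (Finset.univ.filter fun i : Fin n => i.val < k).card = k :=
        card_filter_val_lt k hk2
      set A := (Finset.univ.filter fun i : Fin n => i.val < k).image e with hA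
      have hAcard : A.card = k := by
        rw [hA, Finset.card_image_of_injective _ e.injective, hcard]
      have h1 : ∑ i ∈ Finset.univ.filter (fun i : Fin n => i.val < k), s i
          = ∑ j ∈ A, outdeg T j := by
        rw [hA, Finset.sum_image (fun a _ b _ h => e.injective h)]
        exact Finset.sum_congr rfl fun i _ => he i
      rw [h1, ← hAcard]
      exact choose_le_sum_outdeg T hIrr hAsym A
    · have h1 : ∑ i, s i = ∑ i, outdeg T (e i) := Finset.sum_congr rfl fun i _ => he i
      rw [h1, Equiv.sum_comp e (outdeg T), sum_outdeg T hIrr hAsym]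
  · rintro ⟨hpre, hsum⟩
    set t : ℕ → ℕ := fun i => if h : i < n then s ⟨i, h⟩ else 0 with ht
    have htv : ∀ i : Fin n, t i.val = s i := by
      intro i
      rw [ht]
      simp only
      rw [dif_pos i.isLt]
    have hconv : ∀ k, k ≤ n → ∑ i ∈ Finset.range k, t i
        = ∑ i ∈ Finset.univ.filter (fun i : Fin n => i.val < k), s i := by
      intro k hk
      rw [← sum_filter_val_lt t k hk]
      exact Finset.sum_congr rfl fun i _ => htv i
    have hm : ∀ i j, i ≤ j → j < n → t i ≤ t j := by
      intro i j hij hj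
      rw [ht]
      simp only
      rw [dif_pos hj, dif_pos (lt_of_le_of_lt hij hj)]
      exact hmono (show (⟨i, lt_of_le_of_lt hij hj⟩ : Fin n) ≤ ⟨j, hj⟩ from hij)
    have hL : ∀ k, k ≤ n → k.choose 2 ≤ ∑ i ∈ Finset.range k, t i := by
      intro k hk
      rcases Nat.eq_zero_or_pos k with rfl | hk0
      · simp
      · rw [hconv k hk]
        exact hpre k hk0 hk
    have hsum' : ∑ i ∈ Finset.range n, t i = n.choose 2 := by
      rw [hconv n le_rfl]
      have hfil : Finset.univ.filter (fun i : Fin n => i.val < n) = Finset.univ := by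
        refine Finset.filter_true_of_mem fun i _ => i.isLt
      rw [hfil]
      exact hsum
    obtain ⟨T, hIrr, hAsym, e, he⟩ :=
      key (∑ k ∈ Finset.range n, (∑ i ∈ Finset.range (k+1), t i - (k+1).choose 2))
        t hm hL hsum' le_rfl
    exact ⟨T, hIrr, hAsym, e, fun i => by rw [← htv i]; exact he i⟩
end

section
/- Let u and v be score sequences of lengths k and ℓ. Then the direct sum u ⊕ v, defined as the concatenation of u with the sequence obtained by adding k to each entry of v, is a score sequence of length k + ℓ. -/
lemma sum_map_add (l : List ℕ) (c : ℕ) : (l.map (· + c)).sum = l.sum + l.length * c := by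
  induction l with
  | nil => simp
  | cons a t ih => simp [ih]; ring

lemma choose_two_add (n m : ℕ) : (n + m).choose 2 = n.choose 2 + m.choose 2 + n * m := by
  induction m with
  | zero => simp
  | succ m ih =>
    have h2 : ∀ k : ℕ, (k+1).choose 2 = k + k.choose 2 := by
      intro k
      rw [show (2:ℕ) = 1 + 1 from rfl, Nat.choose_succ_succ]
      simp
    rw [show n + (m+1) = (n+m) + 1 from by ring, h2, ih, h2]
    ring

/-- The direct sum of two score sequences is a score sequence. -/
theorem dsum_isScoreSeq (u v : List ℕ) (hu : IsScoreSeq u) (hv : IsScoreSeq v) :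
    IsScoreSeq (dsum u v) ∧ (dsum u v).length = u.length + v.length := by
  obtain ⟨hus, hub, hup, huS⟩ := hu
  obtain ⟨hvs, hvb, hvp, hvS⟩ := hv
  have hlen : (dsum u v).length = u.length + v.length := by simp [dsum]
  refine ⟨⟨?_, ?_, ?_, ?_⟩, hlen⟩
  · rw [dsum, List.pairwise_append]
    refine ⟨hus, ?_, ?_⟩
    · exact List.Pairwise.map _ (fun a b h => by omega) hvs
    · intro a ha b hb
      simp only [List.mem_map] at hb
      obtain ⟨x, _, rfl⟩ := hb
      have := hub a ha
      omega
  · intro x hx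
    rw [hlen]
    rw [dsum, List.mem_append] at hx
    rcases hx with h | h
    · have := hub x h; omega
    · simp only [List.mem_map] at h
      obtain ⟨y, hy, rfl⟩ := h
      have := hvb y hy
      omega
  · intro k hk hklen
    rw [hlen] at hklen
    rw [dsum, List.take_append, List.sum_append]
    by_cases hkn : k ≤ u.length
    · rcases eq_or_lt_of_le hkn with rfl | hlt
      · simp [List.take_of_length_le (le_refl u.length), huS]
      · have h0 : (v.map (· + u.length)).take (k - u.length) = [] := by
          simp [Nat.sub_eq_zero_of_le hkn]
        rw [h0]
        simpa using hup k hk hlt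
    · push_neg at hkn
      have htu : u.take k = u := List.take_of_length_le (by omega)
      have hml : k - u.length < v.length := by omega
      have hm0 : 0 < k - u.length := by omega
      rw [htu, huS, ← List.map_take, sum_map_add]
      have hmt : (v.take (k - u.length)).length = k - u.length := by
        rw [List.length_take]; omega
      have hvt : (k - u.length).choose 2 ≤ (v.take (k - u.length)).sum := hvp _ hm0 hml
      rw [hmt]
      have hck : k.choose 2 = u.length.choose 2 + (k - u.length).choose 2
          + u.length * (k - u.length) := by
        rw [← choose_two_add]; congr 1; omega
      have := Nat.mul_comm u.length (k - u.length)
      omega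
  · rw [dsum, List.sum_append, sum_map_add, huS, hvS]
    simp only [List.length_append, List.length_map]
    rw [choose_two_add]
    have := Nat.mul_comm u.length v.length
    omega
end
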